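/- Let $X_1, \ldots, X_m$ be independent random variables with $X_i$ taking values in a set $S_i$, and let $f : \prod_i S_i \to \mathbb{R}$ satisfy the bounded differences condition: $|f(\mathbf{x}) - f(\mathbf{x}')| \le c_k$ whenever $\mathbf{x}, \mathbf{x}'$ differ only in the $k$-th coordinate. Then for every $t > 0$, $\Pr[f(X_1, \ldots, X_m) \le \mathbb{E}[f(X_1, \ldots, X_m)] - t] \le \exp(-2t^2 / \sum_{k=1}^m c_k^2)$. -/

import Mathlib

open MeasureTheory ProbabilityTheory Real

/-- If `D` has nonnegative derivative on `[0,∞)`, then `D 0 ≤ D x` for `x ≥ 0`. -/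
lemma mcd_mono_aux {D D' : ℝ → ℝ} (hd : ∀ x, HasDerivAt D (D' x) x)
    (h0 : ∀ x, 0 ≤ x → 0 ≤ D' x) {x : ℝ} (hx : 0 ≤ x) : D 0 ≤ D x := by
  have hmono : MonotoneOn D (Set.Ici (0 : ℝ)) := by
    apply monotoneOn_of_deriv_nonneg (convex_Ici 0)
    · exact fun y _ => (hd y).continuousAt.continuousWithinAt
    · intro y hy
      exact ((hd y).differentiableAt).differentiableWithinAt
    · intro y hy
      rw [interior_Ici] at hy
      rw [(hd y).deriv]
      exact h0 y (le_of_lt hy)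
  exact hmono Set.self_mem_Ici hx hx

/-- Calculus core: for `p ∈ [0,1]` and `h ≥ 0`,
`-p*h + log (1 - p + p * exp h) ≤ h^2/8`. -/
lemma mcd_log_le_nonneg {p : ℝ} (hp0 : 0 ≤ p) (hp1 : p ≤ 1) {h : ℝ} (hh : 0 ≤ h) :
    -p * h + Real.log (1 - p + p * Real.exp h) ≤ h ^ 2 / 8 := by
  set u : ℝ → ℝ := fun x => 1 - p + p * Real.exp x with hu_def
  have hu_pos : ∀ x, 0 < u x := by
    intro x
    rcases eq_or_lt_of_le hp0 with hp | hp
    · simp [hu_def, ← hp]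
    · simp only [hu_def]; nlinarith [mul_pos hp (Real.exp_pos x)]
  set φ : ℝ → ℝ := fun x => -p + p * Real.exp x / u x with hφ_def
  set L : ℝ → ℝ := fun x => -p * x + Real.log (u x) with hL_def
  have hu_deriv : ∀ x, HasDerivAt u (p * Real.exp x) x := by
    intro x
    exact ((Real.hasDerivAt_exp x).const_mul p).const_add (1 - p)
  have hL_deriv : ∀ x, HasDerivAt L (φ x) x := by
    intro x
    have h1 : HasDerivAt (fun x : ℝ => -p * x) (-p) x := by
      simpa using (hasDerivAt_id x).const_mul (-p)
    exact h1.add ((hu_deriv x).log (hu_pos x).ne')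
  have hφ_deriv : ∀ x, HasDerivAt φ ((1 - p) * p * Real.exp x / (u x) ^ 2) x := by
    intro x
    have h1 : HasDerivAt (fun x => p * Real.exp x / u x)
        ((p * Real.exp x * u x - p * Real.exp x * (p * Real.exp x)) / (u x) ^ 2) x :=
      (((Real.hasDerivAt_exp x).const_mul p).div (hu_deriv x) (hu_pos x).ne')
    have h2 := h1.const_add (-p)
    refine h2.congr_deriv ?_
    have hux : u x = 1 - p + p * Real.exp x := rfl
    rw [hux]
    ring
  have hφ_le : ∀ x, (1 - p) * p * Real.exp x / (u x) ^ 2 ≤ 1 / 4 := by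
    intro x
    rw [div_le_iff₀ (pow_pos (hu_pos x) 2)]
    have hux : u x = 1 - p + p * Real.exp x := rfl
    rw [hux]
    nlinarith [sq_nonneg (1 - p - p * Real.exp x), Real.exp_pos x]
  have hφ0 : φ 0 = 0 := by simp [hφ_def, hu_def]
  have hL0 : L 0 = 0 := by simp [hL_def, hu_def]
  have step1 : ∀ x : ℝ, 0 ≤ x → φ x ≤ x / 4 := by
    intro x hx
    have := mcd_mono_aux (D := fun y => y / 4 - φ y)
      (D' := fun y => 1 / 4 - (1 - p) * p * Real.exp y / (u y) ^ 2)
      (fun y => by exact ((hasDerivAt_id' y).div_const 4).sub (hφ_deriv y))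
      (fun y _ => by linarith [hφ_le y]) hx
    simp only [hφ0] at this
    linarith [this]
  have step2 : L h ≤ h ^ 2 / 8 := by
    have := mcd_mono_aux (D := fun y => y ^ 2 / 8 - L y)
      (D' := fun y => y / 4 - φ y)
      (fun y => by
        have h1 : HasDerivAt (fun y : ℝ => y ^ 2 / 8) (y / 4) y := by
          have := (hasDerivAt_pow 2 y).div_const 8
          refine this.congr_deriv ?_
          norm_num
          ring
        exact h1.sub (hL_deriv y))
      (fun y hy => by linarith [step1 y hy]) hh
    simp only [hL0] at this
    linarith [this]
  exact step2

lemma mcd_u_pos {p : ℝ} (hp0 : 0 ≤ p) (hp1 : p ≤ 1) (h : ℝ) :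
    0 < 1 - p + p * Real.exp h := by
  rcases eq_or_lt_of_le hp0 with hp | hp
  · simp [← hp]
  · nlinarith [mul_pos hp (Real.exp_pos h)]

/-- Calculus core, all real `h`. -/
lemma mcd_log_le {p : ℝ} (hp0 : 0 ≤ p) (hp1 : p ≤ 1) (h : ℝ) :
    -p * h + Real.log (1 - p + p * Real.exp h) ≤ h ^ 2 / 8 := by
  rcases le_or_gt 0 h with hh | hh
  · exact mcd_log_le_nonneg hp0 hp1 hh
  · have key := mcd_log_le_nonneg (p := 1 - p) (by linarith) (by linarith)
      (h := -h) (by linarith)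
    have hid : 1 - (1 - p) + (1 - p) * Real.exp (-h)
        = Real.exp (-h) * (1 - p + p * Real.exp h) := by
      rw [Real.exp_neg h]
      have := (Real.exp_pos h).ne'
      field_simp
      ring
    rw [hid, Real.log_mul (Real.exp_ne_zero _) (mcd_u_pos hp0 hp1 h).ne',
      Real.log_exp] at key
    nlinarith [key]

lemma mcd_integrable_of_bdd {α : Type*} [MeasurableSpace α] {ν : Measure α}
    [IsFiniteMeasure ν] {f : α → ℝ} (hm : Measurable f) {C : ℝ}
    (hC : ∀ x, |f x| ≤ C) : Integrable f ν :=
  (integrable_const C).mono' hm.aestronglyMeasurable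
    (Filter.Eventually.of_forall fun x => by simpa using hC x)

/-- Hoeffding's lemma. -/
lemma mcd_hoeffding {α : Type*} [MeasurableSpace α] (ν : Measure α)
    [IsProbabilityMeasure ν] {g : α → ℝ} (hg : Measurable g) {a b : ℝ}
    (hab : ∀ x, a ≤ g x ∧ g x ≤ b) (h0 : ∫ x, g x ∂ν = 0) (s : ℝ) :
    ∫ x, Real.exp (s * g x) ∂ν ≤ Real.exp (s ^ 2 * (b - a) ^ 2 / 8) := by
  have hgb : ∀ x, |g x| ≤ |a| ⊔ |b| := by
    intro x
    have h1 := (hab x).1; have h2 := (hab x).2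
    have h3 := neg_abs_le a; have h4 := le_abs_self b
    have h5 := le_max_left |a| |b|; have h6 := le_max_right |a| |b|
    rw [abs_le]; constructor <;> linarith
  have hgint : Integrable g ν := mcd_integrable_of_bdd hg hgb
  have ha0 : a ≤ 0 := by
    have : a * 1 ≤ 0 := by
      calc a * 1 = ∫ _, a ∂ν := by simp
      _ ≤ ∫ x, g x ∂ν := integral_mono (integrable_const a) hgint fun x => (hab x).1
      _ = 0 := h0
    linarith
  have hb0 : 0 ≤ b := by
    have : 0 ≤ b * 1 := by
      calc (0:ℝ) = ∫ x, g x ∂ν := h0.symm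
      _ ≤ ∫ _, b ∂ν := integral_mono hgint (integrable_const b) fun x => (hab x).2
      _ = b * 1 := by simp
    linarith
  rcases eq_or_lt_of_le (le_trans ha0 hb0) with hab' | hab'
  · -- a = 0 = b, g ≡ 0
    have ha : a = 0 := by linarith
    have hb : b = 0 := by linarith
    have hgz : ∀ x, g x = 0 := fun x =>
      le_antisymm (hb ▸ (hab x).2) (ha ▸ (hab x).1)
    simp only [hgz, mul_zero, Real.exp_zero, integral_const, measure_univ,
      ENNReal.toReal_one, probReal_univ, smul_eq_mul, one_mul, mul_one]
    exact Real.one_le_exp (by positivity)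
  · -- a < b
    set K₁ : ℝ := (b * Real.exp (s * a) - a * Real.exp (s * b)) / (b - a) with hK₁
    set K₂ : ℝ := (Real.exp (s * b) - Real.exp (s * a)) / (b - a) with hK₂
    have hba : (0:ℝ) < b - a := by linarith
    have hpt : ∀ x, Real.exp (s * g x) ≤ K₁ + K₂ * g x := by
      intro x
      obtain ⟨h1, h2⟩ := hab x
      have hθ1 : 0 ≤ (b - g x) / (b - a) := div_nonneg (by linarith) hba.le
      have hθ2 : 0 ≤ (g x - a) / (b - a) := div_nonneg (by linarith) hba.le
      have hθs : (b - g x) / (b - a) + (g x - a) / (b - a) = 1 := by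
        field_simp
        ring
      have hcvx := convexOn_exp.2 (Set.mem_univ (s * a)) (Set.mem_univ (s * b)) hθ1 hθ2 hθs
      simp only [smul_eq_mul] at hcvx
      have hpt' : (b - g x) / (b - a) * (s * a) + (g x - a) / (b - a) * (s * b) = s * g x := by
        field_simp
        ring
      rw [hpt'] at hcvx
      calc Real.exp (s * g x) ≤ (b - g x) / (b - a) * Real.exp (s * a)
            + (g x - a) / (b - a) * Real.exp (s * b) := hcvx
        _ = K₁ + K₂ * g x := by rw [hK₁, hK₂]; field_simp; ring
    have hexp_int : Integrable (fun x => Real.exp (s * g x)) ν := by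
      apply mcd_integrable_of_bdd (hg.const_mul s).exp
        (C := Real.exp (|s| * (|a| ⊔ |b|)))
      intro x
      rw [abs_of_pos (Real.exp_pos _)]
      apply Real.exp_le_exp.2
      calc s * g x ≤ |s * g x| := le_abs_self _
        _ = |s| * |g x| := abs_mul s (g x)
        _ ≤ |s| * (|a| ⊔ |b|) := mul_le_mul_of_nonneg_left (hgb x) (abs_nonneg s)
    have hint_le : ∫ x, Real.exp (s * g x) ∂ν ≤ K₁ := by
      calc ∫ x, Real.exp (s * g x) ∂ν ≤ ∫ x, (K₁ + K₂ * g x) ∂ν :=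
            integral_mono hexp_int ((integrable_const K₁).add (hgint.const_mul K₂)) hpt
        _ = K₁ + K₂ * ∫ x, g x ∂ν := by
            rw [integral_add (integrable_const K₁) (hgint.const_mul K₂),
              integral_const, integral_const_mul]
            simp
        _ = K₁ := by rw [h0]; ring
    -- identify K₁ with exp form
    set p : ℝ := -a / (b - a) with hp
    set hh : ℝ := s * (b - a) with hhh
    have hp0 : 0 ≤ p := div_nonneg (by linarith) hba.le
    have hp1 : p ≤ 1 := by rw [hp, div_le_one hba]; linarith
    have hK₁eq : K₁ = Real.exp (-p * hh) * (1 - p + p * Real.exp hh) := by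
      have h1 : Real.exp (-p * hh) = Real.exp (s * a) := by
        congr 1; rw [hp, hhh]; field_simp
      have e2 : Real.exp (s * a) * Real.exp (s * (b - a)) = Real.exp (s * b) := by
        rw [← Real.exp_add]; congr 1; ring
      rw [h1, hK₁, ← e2, hp, hhh]
      field_simp
      ring
    have hupos := mcd_u_pos hp0 hp1 hh
    have hfin : K₁ ≤ Real.exp (s ^ 2 * (b - a) ^ 2 / 8) := by
      rw [hK₁eq, ← Real.exp_log hupos, ← Real.exp_add]
      apply Real.exp_le_exp.2
      have := mcd_log_le hp0 hp1 hh
      calc -p * hh + Real.log (1 - p + p * Real.exp hh) ≤ hh ^ 2 / 8 := this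
        _ = s ^ 2 * (b - a) ^ 2 / 8 := by rw [hhh]; ring
    linarith

lemma mcd_exp_integrable {α : Type*} [MeasurableSpace α] {ν : Measure α}
    [IsFiniteMeasure ν] {φ : α → ℝ} (hφ : Measurable φ) {C : ℝ}
    (hC : ∀ x, |φ x| ≤ C) (s : ℝ) :
    Integrable (fun x => Real.exp (s * φ x)) ν :=
  mcd_integrable_of_bdd (hφ.const_mul s).exp (C := Real.exp (|s| * C)) fun x => by
    rw [abs_of_pos (Real.exp_pos _)]
    exact Real.exp_le_exp.2 (le_trans (le_abs_self _)
      (by rw [abs_mul]; exact mul_le_mul_of_nonneg_left (hC x) (abs_nonneg s)))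

lemma mcd_nonempty {α : Type*} [MeasurableSpace α] (ν : Measure α)
    [IsProbabilityMeasure ν] : Nonempty α := by
  by_contra h
  rw [not_nonempty_iff] at h
  have h1 : (Set.univ : Set α) = ∅ := Set.univ_eq_empty_iff.2 h
  have h2 := measure_univ (μ := ν)
  rw [h1, measure_empty] at h2
  exact zero_ne_one h2

lemma mcd_bdd_global {m : ℕ} {S : Fin m → Type*} (f : (∀ i, S i) → ℝ)
    (c : Fin m → ℝ)
    (hbd : ∀ (x x' : ∀ i, S i) (k : Fin m),
      (∀ j, j ≠ k → x j = x' j) → |f x - f x'| ≤ c k)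
    (x x' : ∀ i, S i) : |f x - f x'| ≤ ∑ k, c k := by
  classical
  suffices h : ∀ A : Finset (Fin m), ∀ x x' : ∀ i, S i,
      (∀ j, j ∉ A → x j = x' j) → |f x - f x'| ≤ ∑ k ∈ A, c k by
    exact h Finset.univ x x' fun j hj => absurd (Finset.mem_univ j) hj
  intro A
  induction A using Finset.induction_on with
  | empty =>
    intro x x' hxx
    have : x = x' := funext fun j => hxx j (Finset.notMem_empty j)
    simp [this]
  | insert a A ha ih =>
    intro x x' hxx
    set x'' := Function.update x a (x' a) with hx''
    have h1 : |f x - f x''| ≤ c a :=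
      hbd x x'' a fun j hj => (Function.update_of_ne hj _ _).symm
    have h2 : |f x'' - f x'| ≤ ∑ k ∈ A, c k := by
      apply ih x'' x'
      intro j hj
      by_cases hja : j = a
      · subst hja; simp [hx'']
      · rw [hx'', Function.update_of_ne hja]
        exact hxx j (by simp [hja, hj])
    calc |f x - f x'| = |(f x - f x'') + (f x'' - f x')| := by ring_nf
      _ ≤ |f x - f x''| + |f x'' - f x'| := abs_add_le _ _
      _ ≤ c a + ∑ k ∈ A, c k := add_le_add h1 h2
      _ = ∑ k ∈ insert a A, c k := (Finset.sum_insert ha).symm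

universe u

/-- Exponential moment bound for functions of independent variables (bounded differences). -/
lemma mcd_mgf (m : ℕ) :
    ∀ (S : Fin m → Type u) [inst : ∀ i, MeasurableSpace (S i)]
      (ν : ∀ i, Measure (S i)) [instP : ∀ i, IsProbabilityMeasure (ν i)]
      (f : (∀ i, S i) → ℝ) (_hf : Measurable f) (c : Fin m → ℝ)
      (_hbd : ∀ (x x' : ∀ i, S i) (k : Fin m),
        (∀ j, j ≠ k → x j = x' j) → |f x - f x'| ≤ c k) (s : ℝ),
      ∫ x, Real.exp (s * (f x - ∫ y, f y ∂Measure.pi ν)) ∂Measure.pi ν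
        ≤ Real.exp (s ^ 2 * (∑ k, (c k) ^ 2) / 8) := by
  induction m with
  | zero =>
    intro S inst ν instP f hf c hbd s
    have hconst : ∀ x y : ∀ i, S i, f x = f y := fun x y =>
      congrArg f (funext fun i => i.elim0)
    have x0 : ∀ i : Fin 0, S i := fun i => i.elim0
    have h1 : ∫ y, f y ∂Measure.pi ν = f x0 := by
      rw [integral_congr_ae (Filter.Eventually.of_forall fun y => hconst y x0)]
      simp
    have h2 : ∫ x, Real.exp (s * (f x - ∫ y, f y ∂Measure.pi ν)) ∂Measure.pi ν = 1 := by
      rw [h1, integral_congr_ae (Filter.Eventually.of_forall fun x => by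
        rw [hconst x x0, sub_self, mul_zero, Real.exp_zero])]
      simp
    rw [h2]
    have : ∑ k : Fin 0, (c k) ^ 2 = 0 := by simp
    rw [this]
    simp
  | succ n ih =>
    intro S inst ν instP f hf c hbd s
    classical
    set P := Measure.pi ν with hP
    set e := MeasurableEquiv.piFinSuccAbove S 0 with he
    set ν' : ∀ j : Fin n, Measure (S ((0 : Fin (n+1)).succAbove j)) :=
      fun j => ν ((0 : Fin (n+1)).succAbove j) with hν'
    haveI : ∀ j, IsProbabilityMeasure (ν' j) := fun j => instP _
    set Q := (ν 0).prod (Measure.pi ν') with hQ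
    have hmp : MeasurePreserving e P Q := measurePreserving_piFinSuccAbove ν 0
    set F : S 0 × (∀ j : Fin n, S ((0 : Fin (n+1)).succAbove j)) → ℝ :=
      fun q => f (e.symm q) with hF
    have hFmeas : Measurable F := hf.comp e.symm.measurable
    haveI hne : ∀ i, Nonempty (S i) := fun i => mcd_nonempty (ν i)
    have x₀ : ∀ i, S i := fun i => Classical.arbitrary _
    have hc : ∀ k, 0 ≤ c k := fun k => by
      simpa using hbd x₀ x₀ k fun _ _ => rfl
    set B : ℝ := |f x₀| + ∑ k, c k with hB
    have hfb : ∀ x, |f x| ≤ B := by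
      intro x
      have := mcd_bdd_global f c hbd x x₀
      calc |f x| = |(f x - f x₀) + f x₀| := by ring_nf
        _ ≤ |f x - f x₀| + |f x₀| := abs_add_le _ _
        _ ≤ B := by rw [hB]; linarith
    set Ef : ℝ := ∫ y, f y ∂P with hEf
    have hfint : Integrable f P := mcd_integrable_of_bdd hf hfb
    have hEfb : |Ef| ≤ B := by
      rw [hEf]
      calc |∫ y, f y ∂P| = ‖∫ y, f y ∂P‖ := rfl
        _ ≤ ∫ y, ‖f y‖ ∂P := norm_integral_le_integral_norm f
        _ ≤ ∫ _, B ∂P := integral_mono hfint.norm (integrable_const B) fun y => hfb y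
        _ = B := by simp
    have hFb : ∀ q, |F q| ≤ B := fun q => hfb _
    have hFEb : ∀ q, |F q - Ef| ≤ B + B := fun q =>
      (abs_sub _ _).trans (add_le_add (hFb q) hEfb)
    -- the symm of the equivalence is insertNth
    have hesymm : ∀ (y : S 0) (z : ∀ j : Fin n, S ((0 : Fin (n+1)).succAbove j)),
        e.symm (y, z) = Fin.insertNth 0 y z := fun y z => rfl
    -- g : conditional mean over last coordinate
    set g : (∀ j : Fin n, S ((0 : Fin (n+1)).succAbove j)) → ℝ :=
      fun z => ∫ y, F (y, z) ∂(ν 0) with hg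
    have hgsm : StronglyMeasurable g :=
      hFmeas.stronglyMeasurable.integral_prod_left'
    have hFz_meas : ∀ z, Measurable fun y => F (y, z) := fun z =>
      hFmeas.comp (measurable_id.prodMk measurable_const)
    have hFz_int : ∀ z, Integrable (fun y => F (y, z)) (ν 0) := fun z =>
      mcd_integrable_of_bdd (hFz_meas z) fun y => hFb _
    have hgb : ∀ z, |g z| ≤ B := by
      intro z
      calc |g z| = ‖∫ y, F (y, z) ∂(ν 0)‖ := rfl
        _ ≤ ∫ y, ‖F (y, z)‖ ∂(ν 0) := norm_integral_le_integral_norm _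
        _ ≤ ∫ _, B ∂(ν 0) := integral_mono (hFz_int z).norm (integrable_const B)
            fun y => hFb _
        _ = B := by simp
    -- bounded differences of F in the first coordinate
    have hF1 : ∀ (y y' : S 0) z, |F (y, z) - F (y', z)| ≤ c 0 := by
      intro y y' z
      apply hbd _ _ 0
      intro j hj
      obtain ⟨j', rfl⟩ := Fin.exists_succAbove_eq hj
      rw [hesymm, hesymm, Fin.insertNth_apply_succAbove, Fin.insertNth_apply_succAbove]
    -- bounded differences of F in the remaining coordinates
    have hF2 : ∀ (y : S 0) z z' (j : Fin n), (∀ j₂, j₂ ≠ j → z j₂ = z' j₂) →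
        |F (y, z) - F (y, z')| ≤ c ((0 : Fin (n+1)).succAbove j) := by
      intro y z z' j hzz
      apply hbd _ _ ((0 : Fin (n+1)).succAbove j)
      intro w hw
      rcases eq_or_ne w 0 with rfl | hw0
      · rw [hesymm, hesymm, Fin.insertNth_apply_same, Fin.insertNth_apply_same]
      · obtain ⟨j₂, rfl⟩ := Fin.exists_succAbove_eq hw0
        rw [hesymm, hesymm, Fin.insertNth_apply_succAbove, Fin.insertNth_apply_succAbove]
        exact hzz j₂ fun h => hw (by rw [h])
    -- bounded differences of g
    have hgbd : ∀ (z z' : ∀ j : Fin n, S ((0 : Fin (n+1)).succAbove j)) (j : Fin n),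
        (∀ j₂, j₂ ≠ j → z j₂ = z' j₂) →
        |g z - g z'| ≤ c ((0 : Fin (n+1)).succAbove j) := by
      intro z z' j hzz
      have hsub : g z - g z' = ∫ y, (F (y, z) - F (y, z')) ∂(ν 0) :=
        (integral_sub (hFz_int z) (hFz_int z')).symm
      rw [hsub]
      calc |∫ y, (F (y, z) - F (y, z')) ∂(ν 0)|
          ≤ ∫ y, |F (y, z) - F (y, z')| ∂(ν 0) := by
            simpa using norm_integral_le_integral_norm fun y => F (y, z) - F (y, z')
        _ ≤ ∫ _, c ((0 : Fin (n+1)).succAbove j) ∂(ν 0) :=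
            integral_mono ((hFz_int z).sub (hFz_int z')).abs (integrable_const _)
              fun y => hF2 y z z' j hzz
        _ = c ((0 : Fin (n+1)).succAbove j) := by simp
    -- mean of g
    have hFQint : Integrable F Q := mcd_integrable_of_bdd hFmeas hFb
    have hFQ : ∫ q, F q ∂Q = Ef := by
      have h := hmp.integral_comp e.measurableEmbedding F
      have h2 : ∀ x, F (e x) = f x := fun x => by
        rw [hF]; exact congrArg f (e.symm_apply_apply x)
      simp only [h2] at h
      exact h.symm
    have hEg : ∫ z, g z ∂(Measure.pi ν') = Ef := by
      have h2 := integral_prod_symm F hFQint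
      exact (h2.symm).trans hFQ
    -- main chain
    have key0 : ∫ x, Real.exp (s * (f x - Ef)) ∂P
        = ∫ q, Real.exp (s * (F q - Ef)) ∂Q := by
      have h := hmp.integral_comp e.measurableEmbedding
        (fun q => Real.exp (s * (F q - Ef)))
      have h2 : ∀ x, F (e x) = f x := fun x => by rw [hF]; exact congrArg f (e.symm_apply_apply x)
      simp only [h2] at h
      exact h
    have hexpQint : Integrable (fun q => Real.exp (s * (F q - Ef))) Q :=
      mcd_exp_integrable (hFmeas.sub measurable_const) hFEb s
    have key1 : ∫ q, Real.exp (s * (F q - Ef)) ∂Q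
        = ∫ z, (∫ y, Real.exp (s * (F (y, z) - Ef)) ∂(ν 0)) ∂(Measure.pi ν') :=
      integral_prod_symm _ hexpQint
    -- pointwise Hoeffding bound on the inner integral
    have step_le : ∀ z, ∫ y, Real.exp (s * (F (y, z) - Ef)) ∂(ν 0)
        ≤ Real.exp (s * (g z - Ef)) * Real.exp (s ^ 2 * (c 0) ^ 2 / 8) := by
      intro z
      set a : ℝ := sInf (Set.range fun y => F (y, z)) with ha
      have hrne : (Set.range fun y => F (y, z)).Nonempty := Set.range_nonempty _
      have hbdd : BddBelow (Set.range fun y => F (y, z)) := by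
        refine ⟨F (Classical.arbitrary _, z) - c 0, ?_⟩
        rintro w ⟨y, rfl⟩
        have := hF1 (Classical.arbitrary _) y z
        rw [abs_le] at this
        linarith [this.1]
      have hlb : ∀ y, a ≤ F (y, z) := fun y => csInf_le hbdd (Set.mem_range_self y)
      have hub : ∀ y, F (y, z) ≤ a + c 0 := by
        intro y
        have h1 : F (y, z) - c 0 ≤ a := by
          apply le_csInf hrne
          rintro w ⟨y', rfl⟩
          have := hF1 y y' z
          rw [abs_le] at this
          linarith [this.1]
        linarith
      have h0 : ∫ y, (F (y, z) - g z) ∂(ν 0) = 0 := by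
        rw [integral_sub (hFz_int z) (integrable_const _), integral_const]
        simp [hg]
      have hhoef := mcd_hoeffding (ν 0) (g := fun y => F (y, z) - g z) ((hFz_meas z).sub measurable_const)
        (a := a - g z) (b := a + c 0 - g z)
        (fun y => ⟨by linarith [hlb y], by linarith [hub y]⟩) h0 s
      have hhoef' : ∫ y, Real.exp (s * (F (y, z) - g z)) ∂(ν 0)
          ≤ Real.exp (s ^ 2 * (c 0) ^ 2 / 8) := by
        convert hhoef using 3
        ring
      have heq : ∀ y, Real.exp (s * (F (y, z) - Ef))
          = Real.exp (s * (g z - Ef)) * Real.exp (s * (F (y, z) - g z)) := fun y => by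
        rw [← Real.exp_add]; congr 1; ring
      calc ∫ y, Real.exp (s * (F (y, z) - Ef)) ∂(ν 0)
          = ∫ y, Real.exp (s * (g z - Ef)) * Real.exp (s * (F (y, z) - g z)) ∂(ν 0) := by
            simp only [heq]
        _ = Real.exp (s * (g z - Ef)) * ∫ y, Real.exp (s * (F (y, z) - g z)) ∂(ν 0) :=
            integral_const_mul _ _
        _ ≤ Real.exp (s * (g z - Ef)) * Real.exp (s ^ 2 * (c 0) ^ 2 / 8) :=
            mul_le_mul_of_nonneg_left hhoef' (Real.exp_pos _).le
    -- integrability of both sides of the outer comparison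
    have hinner_meas : StronglyMeasurable
        fun z => ∫ y, Real.exp (s * (F (y, z) - Ef)) ∂(ν 0) :=
      (((hFmeas.sub measurable_const).const_mul s).exp).stronglyMeasurable.integral_prod_left'
    have hinner_bd : ∀ z, |∫ y, Real.exp (s * (F (y, z) - Ef)) ∂(ν 0)|
        ≤ Real.exp (|s| * (B + B)) := by
      intro z
      have hptb : ∀ y, Real.exp (s * (F (y, z) - Ef)) ≤ Real.exp (|s| * (B + B)) := by
        intro y
        apply Real.exp_le_exp.2
        calc s * (F (y, z) - Ef) ≤ |s * (F (y, z) - Ef)| := le_abs_self _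
          _ = |s| * |F (y, z) - Ef| := abs_mul _ _
          _ ≤ |s| * (B + B) := mul_le_mul_of_nonneg_left (hFEb _) (abs_nonneg s)
      have hint : Integrable (fun y => Real.exp (s * (F (y, z) - Ef))) (ν 0) :=
        mcd_exp_integrable ((hFz_meas z).sub measurable_const)
          (fun y => hFEb (y, z)) s
      rw [abs_of_nonneg (integral_nonneg fun y => (Real.exp_pos _).le)]
      calc ∫ y, Real.exp (s * (F (y, z) - Ef)) ∂(ν 0)
          ≤ ∫ _, Real.exp (|s| * (B + B)) ∂(ν 0) :=
            integral_mono hint (integrable_const _) hptb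
        _ = Real.exp (|s| * (B + B)) := by simp
    have hint1 : Integrable (fun z => ∫ y, Real.exp (s * (F (y, z) - Ef)) ∂(ν 0))
        (Measure.pi ν') :=
      mcd_integrable_of_bdd hinner_meas.measurable hinner_bd
    have hint2 : Integrable (fun z => Real.exp (s * (g z - Ef))
        * Real.exp (s ^ 2 * (c 0) ^ 2 / 8)) (Measure.pi ν') := by
      apply Integrable.mul_const
      exact mcd_exp_integrable (hgsm.measurable.sub measurable_const)
        (fun z => (abs_sub _ _).trans (add_le_add (hgb z) hEfb)) s
    -- apply the inductive hypothesis to g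
    have hih := ih (fun j => S ((0 : Fin (n+1)).succAbove j)) ν' g hgsm.measurable
      (fun j => c ((0 : Fin (n+1)).succAbove j)) hgbd s
    rw [hEg] at hih
    -- put everything together
    calc ∫ x, Real.exp (s * (f x - Ef)) ∂P
        = ∫ z, (∫ y, Real.exp (s * (F (y, z) - Ef)) ∂(ν 0)) ∂(Measure.pi ν') := by
          rw [key0, key1]
      _ ≤ ∫ z, Real.exp (s * (g z - Ef)) * Real.exp (s ^ 2 * (c 0) ^ 2 / 8)
            ∂(Measure.pi ν') := integral_mono hint1 hint2 step_le
      _ = (∫ z, Real.exp (s * (g z - Ef)) ∂(Measure.pi ν'))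
            * Real.exp (s ^ 2 * (c 0) ^ 2 / 8) := integral_mul_const _ _
      _ ≤ Real.exp (s ^ 2 * (∑ j : Fin n, (c ((0 : Fin (n+1)).succAbove j)) ^ 2) / 8)
            * Real.exp (s ^ 2 * (c 0) ^ 2 / 8) :=
          mul_le_mul_of_nonneg_right hih (Real.exp_pos _).le
      _ = Real.exp (s ^ 2 * (∑ k, (c k) ^ 2) / 8) := by
          rw [← Real.exp_add]
          congr 1
          rw [Fin.sum_univ_succAbove (fun k => (c k) ^ 2) 0]
          ring

/-- McDiarmid's bounded differences inequality (lower tail): if `X 1, …, X m` are independent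
and `f` satisfies the bounded differences condition with constants `c k`, then
`μ[f(X) ≤ 𝔼[f(X)] - t] ≤ exp (-2t² / ∑ c k²)` for every `t > 0`. -/
theorem mcdiarmid_inequality {Ω : Type*} [MeasurableSpace Ω] (μ : Measure Ω)
    [IsProbabilityMeasure μ] (m : ℕ) (S : Fin m → Type*)
    [∀ i, MeasurableSpace (S i)] (X : ∀ i, Ω → S i)
    (hmeas : ∀ i, Measurable (X i))
    (hind : iIndepFun X μ)
    (f : (∀ i, S i) → ℝ) (hf : Measurable f)
    (c : Fin m → ℝ) (hc : ∀ k, 0 ≤ c k)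
    (hbd : ∀ (x x' : ∀ i, S i) (k : Fin m),
      (∀ j, j ≠ k → x j = x' j) → |f x - f x'| ≤ c k)
    (t : ℝ) (ht : 0 < t) :
    (μ {ω | f (fun i => X i ω) ≤ (∫ ω', f (fun i => X i ω') ∂μ) - t}).toReal
      ≤ Real.exp (-2 * t ^ 2 / ∑ k, (c k) ^ 2) := by
  classical
  set ν : ∀ i, Measure (S i) := fun i => μ.map (X i) with hν
  haveI : ∀ i, IsProbabilityMeasure (ν i) := fun i =>
    Measure.isProbabilityMeasure_map (hmeas i).aemeasurable
  set J : Ω → ∀ i, S i := fun ω i => X i ω with hJdef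
  have hJ : Measurable J := measurable_pi_lambda _ hmeas
  set P : Measure (∀ i, S i) := Measure.pi ν with hP
  have hmap : P = μ.map J := by
    apply Measure.pi_eq
    intro s hs
    rw [Measure.map_apply hJ (MeasurableSet.univ_pi hs)]
    have hpre : J ⁻¹' Set.pi Set.univ s = ⋂ i, X i ⁻¹' s i := by
      ext ω; simp [hJdef, Set.mem_pi]
    rw [hpre]
    have := hind.measure_inter_preimage_eq_mul Finset.univ (sets := s)
      (fun i _ => hs i)
    simp only [Finset.mem_univ, Set.iInter_true, Set.biInter_univ] at this
    rw [this]
    exact Finset.prod_congr rfl fun i _ =>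
      (Measure.map_apply (hmeas i) (hs i)).symm
  set Ef : ℝ := ∫ x, f x ∂P with hEfdef
  have hEf_eq : ∫ ω', f (fun i => X i ω') ∂μ = Ef := by
    rw [hEfdef, hmap, integral_map hJ.aemeasurable hf.aestronglyMeasurable]
  set A : Set (∀ i, S i) := {x | f x ≤ Ef - t} with hA
  have hAmeas : MeasurableSet A := hf measurableSet_Iic
  have hμA : μ {ω | f (fun i => X i ω) ≤ (∫ ω', f (fun i => X i ω') ∂μ) - t} = P A := by
    rw [hEf_eq, hmap, Measure.map_apply hJ hAmeas]
    rfl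
  rw [hμA]
  haveI : IsProbabilityMeasure P := by rw [hP]; infer_instance
  set Vc : ℝ := ∑ k, (c k) ^ 2 with hVc
  have hVcnn : 0 ≤ Vc := Finset.sum_nonneg fun k _ => sq_nonneg _
  rcases eq_or_lt_of_le hVcnn with hVc0 | hVcpos
  · -- degenerate case: division by zero, RHS = 1
    rw [← hVc0, div_zero, Real.exp_zero]
    calc (P A).toReal ≤ (P Set.univ).toReal :=
        ENNReal.toReal_mono (measure_ne_top P Set.univ)
          (measure_mono (Set.subset_univ A))
      _ = 1 := by simp
  · -- main case
    set s : ℝ := 4 * t / Vc with hs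
    have hspos : 0 < s := by positivity
    -- boundedness of f
    haveI : ∀ i, Nonempty (S i) := fun i => mcd_nonempty (ν i)
    have hne : Nonempty (∀ i, S i) := ⟨fun i => Classical.arbitrary _⟩
    obtain ⟨x₀⟩ := hne
    set B : ℝ := |f x₀| + ∑ k, c k with hB
    have hfb : ∀ x, |f x| ≤ B := by
      intro x
      have := mcd_bdd_global f c hbd x x₀
      calc |f x| = |(f x - f x₀) + f x₀| := by ring_nf
        _ ≤ |f x - f x₀| + |f x₀| := abs_add_le _ _
        _ ≤ B := by rw [hB]; linarith
    have hfint : Integrable f P := mcd_integrable_of_bdd hf hfb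
    have hEfb : |Ef| ≤ B := by
      rw [hEfdef]
      calc |∫ y, f y ∂P| = ‖∫ y, f y ∂P‖ := rfl
        _ ≤ ∫ y, ‖f y‖ ∂P := norm_integral_le_integral_norm f
        _ ≤ ∫ _, B ∂P := integral_mono hfint.norm (integrable_const B) fun y => hfb y
        _ = B := by simp
    have hint : Integrable (fun x => Real.exp (s * (Ef - f x))) P := by
      have := mcd_exp_integrable (ν := P) (φ := fun x => Ef - f x)
        (measurable_const.sub hf)
        (C := B + B) (fun x => (abs_sub _ _).trans (add_le_add hEfb (hfb x))) s
      exact this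
    -- MGF bound via mcd_mgf with parameter -s
    have hmgf : ∫ x, Real.exp (s * (Ef - f x)) ∂P ≤ Real.exp (s ^ 2 * Vc / 8) := by
      have := mcd_mgf m S ν f hf c hbd (-s)
      rw [← hEfdef] at this
      have heq : ∀ x, Real.exp (-s * (f x - Ef)) = Real.exp (s * (Ef - f x)) :=
        fun x => by congr 1; ring
      simp only [heq] at this
      calc ∫ x, Real.exp (s * (Ef - f x)) ∂P ≤ Real.exp ((-s) ^ 2 * Vc / 8) := this
        _ = Real.exp (s ^ 2 * Vc / 8) := by congr 1; ring
    -- Chernoff / Markov step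
    have hsub : A ⊆ {x | Real.exp (s * t) ≤ Real.exp (s * (Ef - f x))} := by
      intro x hx
      simp only [hA, Set.mem_setOf_eq] at hx ⊢
      apply Real.exp_le_exp.2
      have : t ≤ Ef - f x := by linarith
      exact mul_le_mul_of_nonneg_left this hspos.le
    have hmarkov := mul_meas_ge_le_integral_of_nonneg
      (μ := P) (f := fun x => Real.exp (s * (Ef - f x)))
      (Filter.Eventually.of_forall fun x => (Real.exp_pos _).le) hint (Real.exp (s * t))
    have hmono : (P A).toReal
        ≤ (P {x | Real.exp (s * t) ≤ Real.exp (s * (Ef - f x))}).toReal :=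
      ENNReal.toReal_mono (measure_ne_top _ _) (measure_mono hsub)
    have hfinal : (P A).toReal ≤ Real.exp (s ^ 2 * Vc / 8) / Real.exp (s * t) := by
      calc (P A).toReal ≤ _ := hmono
        _ ≤ (∫ x, Real.exp (s * (Ef - f x)) ∂P) / Real.exp (s * t) := by
            rw [le_div_iff₀ (Real.exp_pos (s * t))]
            calc (P {x | Real.exp (s * t) ≤ Real.exp (s * (Ef - f x))}).toReal
                  * Real.exp (s * t)
                = Real.exp (s * t)
                  * (P {x | Real.exp (s * t) ≤ Real.exp (s * (Ef - f x))}).toReal := by ring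
              _ ≤ _ := hmarkov
        _ ≤ Real.exp (s ^ 2 * Vc / 8) / Real.exp (s * t) :=
            div_le_div_of_nonneg_right hmgf (Real.exp_pos _).le |>.trans_eq rfl
    calc (P A).toReal ≤ Real.exp (s ^ 2 * Vc / 8) / Real.exp (s * t) := hfinal
      _ = Real.exp (s ^ 2 * Vc / 8 - s * t) := (Real.exp_sub _ _).symm
      _ = Real.exp (-2 * t ^ 2 / Vc) := by
          congr 1
          rw [hs]
          field_simp
          ring
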